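/- arXiv:2108.04133 — 2 statements merged into one kernel-verified Lean document; each statement's English description precedes it below -/
import Mathlib

section
/- Let M and N be n×n complex matrices and let p ∈ ℂ[X] be the polynomial p(X) = det(M − X·N), the determinant of the matrix with polynomial entries M − X·N. Then p(0) = det(M) and the degree of p is at most rank(N). In particular, if M is invertible, the pencil M x = ω N x has at most rank(N) finite eigenvalues counted with multiplicity. -/
open Matrix Polynomial

/-- If every entry of column `j` has `natDegree ≤ d j`, then the determinant has
`natDegree ≤ ∑ j, d j`. -/
lemma natDegree_det_le_sum {m : Type*} [Fintype m] [DecidableEq m] {R : Type*} [CommRing R]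
    (P : Matrix m m R[X]) (d : m → ℕ) (h : ∀ i j, (P i j).natDegree ≤ d j) :
    P.det.natDegree ≤ ∑ j, d j := by
  rw [Matrix.det_apply]
  apply Polynomial.natDegree_sum_le_of_forall_le
  intro σ _
  calc (Equiv.Perm.sign σ • ∏ i, P (σ i) i).natDegree
      ≤ (∏ i, P (σ i) i).natDegree := by
        rw [Units.smul_def, zsmul_eq_mul]
        refine Polynomial.natDegree_mul_le.trans ?_
        simp
    _ ≤ ∑ i, (P (σ i) i).natDegree := Polynomial.natDegree_prod_le _ _
    _ ≤ ∑ i, d i := Finset.sum_le_sum fun i _ => h (σ i) i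

/-- Rank factorization: `N = A * B` with inner dimension `N.rank`. -/
lemma exists_rank_factorization (n : ℕ) (N : Matrix (Fin n) (Fin n) ℂ) :
    ∃ (A : Matrix (Fin n) (Fin N.rank) ℂ) (B : Matrix (Fin N.rank) (Fin n) ℂ),
      N = A * B := by
  have hrank : N.rank = Module.finrank ℂ (LinearMap.range N.mulVecLin) := rfl
  let b : Module.Basis (Fin N.rank) ℂ (LinearMap.range N.mulVecLin) :=
    (Module.finBasis ℂ _).reindex (finCongr hrank.symm)
  have colmem : ∀ j, (fun i => N i j) ∈ LinearMap.range N.mulVecLin := by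
    intro j
    refine ⟨Pi.single j 1, ?_⟩
    ext i
    simp [Matrix.mulVecLin_apply, Matrix.mulVec_single]
  refine ⟨Matrix.of fun i k => ((b k : Fin n → ℂ)) i,
    Matrix.of fun k j => b.repr ⟨_, colmem j⟩ k, ?_⟩
  ext i j
  have h2 : ∑ k, (b.repr ⟨fun i => N i j, colmem j⟩) k • ((b k : Fin n → ℂ) i) = N i j := by
    have h := congrArg (fun v : LinearMap.range N.mulVecLin => (v : Fin n → ℂ) i)
      (b.sum_repr ⟨fun i => N i j, colmem j⟩)
    simpa [-Module.Basis.sum_repr] using h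
  rw [Matrix.mul_apply]
  simp only [Matrix.of_apply]
  rw [← h2]
  exact Finset.sum_congr rfl fun k _ => by rw [smul_eq_mul, mul_comm]

/-- For square complex matrices `M`, `N`, the polynomial `p(X) = det(M − X·N)` satisfies
`p(0) = det M` and `deg p ≤ rank N`; hence if `M` is invertible the pencil `M x = ω N x`
has at most `rank N` finite eigenvalues counted with multiplicity. -/
theorem pencil_det_eval_zero_and_degree_le_rank
    (n : ℕ) (M N : Matrix (Fin n) (Fin n) ℂ) :
    ((M.map (Polynomial.C) - (Polynomial.X : Polynomial ℂ) • N.map (Polynomial.C)).det).eval 0 = M.det ∧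
      ((M.map (Polynomial.C) - (Polynomial.X : Polynomial ℂ) • N.map (Polynomial.C)).det).natDegree ≤ N.rank := by
  constructor
  · have := (Polynomial.evalRingHom (0 : ℂ)).map_det
      (M.map (Polynomial.C) - (Polynomial.X : Polynomial ℂ) • N.map (Polynomial.C))
    simp only [RingHom.mapMatrix_apply] at this
    rw [show ((M.map (Polynomial.C) - (Polynomial.X : Polynomial ℂ) • N.map (Polynomial.C)).det).eval 0
        = (Polynomial.evalRingHom (0 : ℂ))
            (M.map (Polynomial.C) - (Polynomial.X : Polynomial ℂ) • N.map (Polynomial.C)).det from rfl,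
      this]
    congr 1
    ext i j
    simp [Matrix.map_apply, Matrix.sub_apply]
  · obtain ⟨A, B, hAB⟩ := exists_rank_factorization n N
    -- express the pencil determinant via a block determinant
    have key : (M.map (Polynomial.C) - (Polynomial.X : Polynomial ℂ) • N.map (Polynomial.C)).det
        = (Matrix.fromBlocks (1 : Matrix (Fin N.rank) (Fin N.rank) ℂ[X]) (B.map Polynomial.C)
            ((Polynomial.X : ℂ[X]) • A.map Polynomial.C) (M.map Polynomial.C)).det := by
      rw [Matrix.det_fromBlocks_one₁₁, Matrix.smul_mul,
        ← Matrix.map_mul (f := (Polynomial.C : ℂ →+* ℂ[X])), ← hAB]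
    rw [key]
    have := natDegree_det_le_sum
      (Matrix.fromBlocks (1 : Matrix (Fin N.rank) (Fin N.rank) ℂ[X]) (B.map Polynomial.C)
        ((Polynomial.X : ℂ[X]) • A.map Polynomial.C) (M.map Polynomial.C))
      (Sum.elim (fun _ => 1) (fun _ => 0)) ?_
    · refine this.trans ?_
      simp
    · rintro (i | i) (j | j) <;>
        simp only [Matrix.fromBlocks_apply₁₁, Matrix.fromBlocks_apply₁₂,
          Matrix.fromBlocks_apply₂₁, Matrix.fromBlocks_apply₂₂, Sum.elim_inl, Sum.elim_inr,
          Matrix.smul_apply, Matrix.map_apply, smul_eq_mul]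
      · rcases eq_or_ne i j with h | h <;> simp [Matrix.one_apply, h]
      · simp
      · refine Polynomial.natDegree_mul_le.trans ?_
        simp
      · simp
end

section
/- Let X be a nonzero complex Banach space, let T : X → X be a compact bounded linear operator, and let (Tₙ) be a sequence of bounded linear operators on X with ‖Tₙ − T‖ → 0. Then every nonzero point of the spectrum of T is attained in the limit by the discrete spectra: for every λ in the spectrum of T with λ ≠ 0, there exists a sequence (λₙ) with λₙ in the spectrum of Tₙ for each n and λₙ → λ. In particular no nonzero continuous eigenvalue is missed by the approximating operators. -/
open Filter Metric

set_option linter.unusedSectionVars false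

section Aux

variable {X : Type*} [NormedAddCommGroup X] [NormedSpace ℂ X] [CompleteSpace X]

/-- Subsequence extraction for compact operators. -/
lemma compact_subseq (T : X →L[ℂ] X) (hT : IsCompactOperator (T : X → X))
    (x : ℕ → X) (hx : ∀ k, ‖x k‖ ≤ 1) :
    ∃ y : X, ∃ φ : ℕ → ℕ, StrictMono φ ∧
      Tendsto (fun k => T (x (φ k))) atTop (nhds y) := by
  have hT' : IsCompactOperator ((T : X →ₗ[ℂ] X) : X → X) := hT
  obtain ⟨K, hK, him⟩ := hT'.image_subset_compact_of_bounded
    (Metric.isBounded_closedBall (x := (0:X)) (r := 1))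
  have hmem : ∀ k, T (x k) ∈ K := fun k =>
    him ⟨x k, mem_closedBall_zero_iff.mpr (hx k), rfl⟩
  obtain ⟨y, _, φ, hφ, hlim⟩ := hK.tendsto_subseq hmem
  exact ⟨y, φ, hφ, hlim⟩

/-- Riesz lemma in relative form: given closed `A < B`, find a unit vector in `B`
that is `1/2`-far from `A`. -/
lemma riesz_step (A B : Submodule ℂ X) (hA : IsClosed (A : Set X)) (hAB : A ≤ B)
    {v : X} (hvB : v ∈ B) (hvA : v ∉ A) :
    ∃ e : X, e ∈ B ∧ ‖e‖ = 1 ∧ ∀ w ∈ A, (1:ℝ)/2 ≤ ‖e - w‖ := by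
  set F : Submodule ℂ B := A.comap B.subtype with hF
  have hFc : IsClosed (F : Set B) := by
    have : (F : Set B) = ((↑) : B → X) ⁻¹' (A : Set X) := rfl
    rw [this]
    exact hA.preimage continuous_subtype_val
  have hFne : ∃ z : B, z ∉ F := ⟨⟨v, hvB⟩, by simpa [hF, Submodule.mem_comap]⟩
  obtain ⟨x0, hx0F, hx0⟩ := riesz_lemma hFc hFne (show (1:ℝ)/2 < 1 by norm_num)
  have hx0ne : (x0 : X) ≠ 0 := by
    intro h
    exact hx0F (by simpa [hF, Submodule.mem_comap, h] using A.zero_mem)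
  have hnx0 : (0:ℝ) < ‖(x0 : X)‖ := norm_pos_iff.mpr hx0ne
  have hcne : ((‖(x0 : X)‖ : ℂ)) ≠ 0 := by exact_mod_cast hnx0.ne'
  refine ⟨(‖(x0 : X)‖ : ℂ)⁻¹ • (x0 : X), B.smul_mem _ x0.2, ?_, ?_⟩
  · rw [norm_smul, norm_inv]
    simp [abs_of_pos hnx0, inv_mul_cancel₀ hnx0.ne']
  · intro w hw
    have hyF : (⟨(‖(x0 : X)‖ : ℂ) • w, B.smul_mem _ (hAB hw)⟩ : B) ∈ F := by
      simpa [hF, Submodule.mem_comap] using A.smul_mem ((‖(x0 : X)‖ : ℂ)) hw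
    have h1 : (1:ℝ)/2 * ‖(x0 : X)‖ ≤ ‖(x0 : X) - (‖(x0 : X)‖ : ℂ) • w‖ := hx0 _ hyF
    have heq : (‖(x0 : X)‖ : ℂ)⁻¹ • (x0 : X) - w
        = (‖(x0 : X)‖ : ℂ)⁻¹ • ((x0 : X) - (‖(x0 : X)‖ : ℂ) • w) := by
      rw [smul_sub, smul_smul, inv_mul_cancel₀ hcne, one_smul]
    calc (1:ℝ)/2 = ‖(x0 : X)‖⁻¹ * ((1:ℝ)/2 * ‖(x0 : X)‖) := by
            field_simp
      _ ≤ ‖(x0 : X)‖⁻¹ * ‖(x0 : X) - (‖(x0 : X)‖ : ℂ) • w‖ := by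
            gcongr
      _ = ‖(‖(x0 : X)‖ : ℂ)⁻¹ • (x0 : X) - w‖ := by
            rw [heq, norm_smul, norm_inv]
            simp [abs_of_pos hnx0]

end Aux

section Aux2

variable {X : Type*} [NormedAddCommGroup X] [NormedSpace ℂ X] [CompleteSpace X]

lemma norm_coe_inv_smul {r : ℝ} (hr : 0 < r) (y : X) : ‖(r:ℂ)⁻¹ • y‖ = r⁻¹ * ‖y‖ := by
  rw [norm_smul, norm_inv]
  simp [abs_of_pos hr]

/-- A bounded-below operator maps closed submodules to closed sets. -/
lemma closed_image (S : X →L[ℂ] X) {c : ℝ} (hc : 0 < c)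
    (hb : ∀ x : X, c * ‖x‖ ≤ ‖S x‖) (Y : Submodule ℂ X)
    (hY : IsClosed (Y : Set X)) : IsClosed (S '' (Y : Set X)) := by
  refine IsSeqClosed.isClosed ?_
  intro u y hu huy
  choose v hvY hvS using hu
  have hcauchy : CauchySeq u := huy.cauchySeq
  have hvcauchy : CauchySeq v := by
    rw [Metric.cauchySeq_iff] at hcauchy ⊢
    intro ε hε
    obtain ⟨N, hN⟩ := hcauchy (c * ε) (by positivity)
    refine ⟨N, fun m hm n hn => ?_⟩
    have h1 := hN m hm n hn
    rw [dist_eq_norm] at h1 ⊢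
    have h2 : c * ‖v m - v n‖ ≤ ‖S (v m - v n)‖ := hb _
    rw [map_sub, hvS, hvS] at h2
    nlinarith
  obtain ⟨x, hx⟩ := cauchySeq_tendsto_of_complete hvcauchy
  have hxY : x ∈ Y := hY.mem_of_tendsto hx (Eventually.of_forall hvY)
  have hSx : Tendsto (fun n => S (v n)) atTop (nhds (S x)) :=
    (S.continuous.tendsto x).comp hx
  have : S x = y := by
    apply tendsto_nhds_unique hSx
    simpa [hvS] using huy
  exact ⟨x, hxY, this⟩

/-- Every nonzero spectral point of a compact operator is an eigenvalue
(Fredholm alternative). -/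
lemma exists_eigen (T : X →L[ℂ] X) (hT : IsCompactOperator (T : X → X))
    {μ : ℂ} (hμ0 : μ ≠ 0) (hμ : μ ∈ spectrum ℂ T) :
    ∃ x : X, ‖x‖ = 1 ∧ T x = μ • x := by
  by_contra hcon
  push_neg at hcon
  set S : X →L[ℂ] X := algebraMap ℂ (X →L[ℂ] X) μ - T with hSdef
  have hSapp : ∀ x : X, S x = μ • x - T x := by
    intro x
    simp [hSdef, Algebra.algebraMap_eq_smul_one, ContinuousLinearMap.sub_apply,
      ContinuousLinearMap.smul_apply, ContinuousLinearMap.one_apply]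
  -- Step 1: S is bounded below
  have hbb : ∃ c : ℝ, 0 < c ∧ ∀ x : X, c * ‖x‖ ≤ ‖S x‖ := by
    by_contra hno
    push_neg at hno
    have hexu : ∀ k : ℕ, ∃ u : X, ‖u‖ = 1 ∧ ‖S u‖ < 1/(k+1) := by
      intro k
      obtain ⟨x, hx⟩ := hno (1/(k+1)) (by positivity)
      have hx0 : x ≠ 0 := by
        rintro rfl
        simp at hx
      have hnx : (0:ℝ) < ‖x‖ := norm_pos_iff.mpr hx0
      refine ⟨(‖x‖ : ℂ)⁻¹ • x, ?_, ?_⟩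
      · rw [norm_coe_inv_smul hnx, inv_mul_cancel₀ hnx.ne']
      · rw [map_smul, norm_coe_inv_smul hnx]
        calc ‖x‖⁻¹ * ‖S x‖ < ‖x‖⁻¹ * (1/(k+1) * ‖x‖) := by exact mul_lt_mul_of_pos_left hx (inv_pos.mpr hnx)
          _ = 1/(k+1) := by field_simp
    choose u hu1 huS using hexu
    obtain ⟨y, φ, hφ, hty⟩ := compact_subseq T hT u (fun k => (hu1 k).le)
    have hdom : ∀ k : ℕ, ‖S (u (φ k))‖ ≤ 1/(k+1) := by
      intro k
      refine (huS (φ k)).le.trans ?_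
      have h1 : (k:ℝ)+1 ≤ (φ k:ℝ)+1 := by
        exact_mod_cast Nat.succ_le_succ hφ.le_apply
      exact one_div_le_one_div_of_le (by positivity) h1
    have hSu : Tendsto (fun k => S (u (φ k))) atTop (nhds 0) := by
      apply squeeze_zero_norm hdom
      exact_mod_cast tendsto_one_div_add_atTop_nhds_zero_nat (𝕜 := ℝ)
    -- the subsequence of u converges
    have hμu : Tendsto (fun k => μ • u (φ k)) atTop (nhds y) := by
      have : (fun k => μ • u (φ k)) = fun k => S (u (φ k)) + T (u (φ k)) := by
        funext k
        rw [hSapp]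
        abel
      rw [this]
      simpa using hSu.add hty
    have huconv : Tendsto (fun k => u (φ k)) atTop (nhds (μ⁻¹ • y)) := by
      have := hμu.const_smul μ⁻¹
      simpa [smul_smul, inv_mul_cancel₀ hμ0] using this
    set x := μ⁻¹ • y with hxdef
    have hx1 : ‖x‖ = 1 := by
      have h1 : Tendsto (fun k => ‖u (φ k)‖) atTop (nhds ‖x‖) :=
        (continuous_norm.tendsto x).comp huconv
      have h2 : (fun k => ‖u (φ k)‖) = fun _ => (1:ℝ) := funext fun k => hu1 _
      rw [h2] at h1
      exact (tendsto_const_nhds_iff.mp h1).symm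
    have hSx : S x = 0 := by
      have h1 : Tendsto (fun k => S (u (φ k))) atTop (nhds (S x)) :=
        (S.continuous.tendsto x).comp huconv
      exact tendsto_nhds_unique h1 hSu
    rw [hSapp] at hSx
    exact hcon x hx1 (by rw [sub_eq_zero] at hSx; exact hSx.symm) 
  obtain ⟨c, hc, hb⟩ := hbb
  have hinj : Function.Injective S := by
    intro a b hab
    have h1 : c * ‖a - b‖ ≤ ‖S (a - b)‖ := hb _
    rw [map_sub, hab, sub_self, norm_zero] at h1
    have : ‖a - b‖ ≤ 0 := by nlinarith
    rwa [norm_le_zero_iff, sub_eq_zero] at this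
  -- Step 2: S is surjective
  have hsurj : Function.Surjective S := by
    by_contra hns
    rw [Function.Surjective] at hns
    push_neg at hns
    obtain ⟨b0, hb0⟩ := hns
    set Y : ℕ → Submodule ℂ X := fun n => LinearMap.range ((S^n : X →L[ℂ] X) : X →ₗ[ℂ] X) with hYdef
    have hY0 : Y 0 = ⊤ := by
      rw [hYdef]
      simp only [pow_zero]
      ext z
      simp only [LinearMap.mem_range, Submodule.mem_top, iff_true]
      exact ⟨z, rfl⟩
    have hYsucc : ∀ n, Y (n+1) = Submodule.map (S : X →ₗ[ℂ] X) (Y n) := by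
      intro n
      ext z
      simp only [hYdef, LinearMap.mem_range, Submodule.mem_map,
        ContinuousLinearMap.coe_coe]
      constructor
      · rintro ⟨w, rfl⟩
        exact ⟨(S^n) w, ⟨w, rfl⟩, by rw [← ContinuousLinearMap.mul_apply, ← pow_succ']⟩
      · rintro ⟨_, ⟨w, rfl⟩, rfl⟩
        exact ⟨w, by rw [← ContinuousLinearMap.mul_apply, ← pow_succ']⟩
    have hmono : ∀ n, Y (n+1) ≤ Y n := by
      intro n z hz
      obtain ⟨w, rfl⟩ := LinearMap.mem_range.mp hz
      rw [hYdef]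
      refine LinearMap.mem_range.mpr ⟨S w, ?_⟩
      rw [ContinuousLinearMap.coe_coe, ContinuousLinearMap.coe_coe, ← ContinuousLinearMap.mul_apply, ← pow_succ]
    have hanti : ∀ {m n : ℕ}, m ≤ n → Y n ≤ Y m := by
      intro m n h
      induction h with
      | refl => exact le_rfl
      | step h ih => exact le_trans (hmono _) ih
    have hclosed : ∀ n, IsClosed ((Y n : Set X)) := by
      intro n
      induction n with
      | zero => rw [hY0]; simp only [Submodule.top_coe]; exact isClosed_univ
      | succ n ih =>
        have : ((Y (n+1) : Submodule ℂ X) : Set X) = S '' (Y n : Set X) := by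
          rw [hYsucc n, Submodule.map_coe]
          rfl
        rw [this]
        exact closed_image S hc hb (Y n) ih
    -- strict decrease
    have hne : ∀ n, ∃ x ∈ Y n, x ∉ Y (n+1) := by
      have hkey : ∀ n, Y (n+1) = Y n → Y 1 = Y 0 := by
        intro n
        induction n with
        | zero => exact fun h => h
        | succ n ih =>
          intro h
          apply ih
          apply le_antisymm (hmono n)
          intro w hw
          have hSw : S w ∈ Y (n+1) := by
            rw [hYsucc n]
            exact Submodule.mem_map_of_mem hw
          rw [← h] at hSw
          rw [hYsucc (n+1)] at hSw
          obtain ⟨z, hz, hzw⟩ := hSw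
          have : z = w := hinj hzw
          rwa [← this]
      intro n
      by_contra hcontra
      push_neg at hcontra
      have heq : Y (n+1) = Y n := le_antisymm (hmono n) (fun x hx => hcontra x hx)
      have h10 : Y 1 = Y 0 := hkey n heq
      rw [hY0] at h10
      have : b0 ∈ Y 1 := h10 ▸ Submodule.mem_top
      obtain ⟨w, hw⟩ := LinearMap.mem_range.mp this
      exact hb0 w (by simpa [pow_one] using hw)
    -- Riesz sequence
    have he : ∀ n : ℕ, ∃ e : X, e ∈ Y n ∧ ‖e‖ = 1 ∧ ∀ w ∈ Y (n+1), (1:ℝ)/2 ≤ ‖e - w‖ := by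
      intro n
      obtain ⟨x, hxn, hxn1⟩ := hne n
      exact riesz_step (Y (n+1)) (Y n) (hclosed (n+1)) (hmono n) hxn hxn1
    choose e heY heN heD using he
    obtain ⟨y, φ, hφ, hty⟩ := compact_subseq T hT e (fun k => (heN k).le)
    have hcauchy : CauchySeq (fun k => T (e (φ k))) := hty.cauchySeq
    rw [Metric.cauchySeq_iff] at hcauchy
    have hμpos : (0:ℝ) < ‖μ‖ := norm_pos_iff.mpr hμ0
    obtain ⟨N, hN⟩ := hcauchy (‖μ‖/2) (by positivity)
    have hlt : φ N < φ (N+1) := hφ (Nat.lt_succ_self N)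
    set m := φ N with hm
    set n := φ (N+1) with hn
    -- T e m - T e n = μ • (e m - w) with w ∈ Y (m+1)
    have hSem : S (e m) ∈ Y (m+1) := by
      rw [hYsucc m]
      exact Submodule.mem_map_of_mem (heY m)
    have hTen : T (e n) ∈ Y (m+1) := by
      have h1 : T (e n) ∈ Y n := by
        have h2 : S (e n) ∈ Y n := hmono n (by rw [hYsucc n]; exact Submodule.mem_map_of_mem (heY n))
        have h3 : T (e n) = μ • (e n) - S (e n) := by rw [hSapp]; abel
        rw [h3]
        exact Submodule.sub_mem _ (Submodule.smul_mem _ _ (heY n)) h2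
      exact hanti hlt h1
    set w : X := μ⁻¹ • (S (e m) + T (e n)) with hw
    have hwmem : w ∈ Y (m+1) :=
      Submodule.smul_mem _ _ (Submodule.add_mem _ hSem hTen)
    have hdiff : T (e m) - T (e n) = μ • (e m - w) := by
      rw [hw, smul_sub, smul_smul, mul_inv_cancel₀ hμ0, one_smul]
      have : T (e m) = μ • e m - S (e m) := by rw [hSapp]; abel
      rw [this]
      abel
    have hge : ‖μ‖/2 ≤ ‖T (e m) - T (e n)‖ := by
      rw [hdiff, norm_smul]
      have := heD m w hwmem
      calc ‖μ‖/2 = ‖μ‖ * (1/2) := by ring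
        _ ≤ ‖μ‖ * ‖e m - w‖ := mul_le_mul_of_nonneg_left this (norm_nonneg μ)
    have hlt2 := hN N le_rfl (N+1) (Nat.le_succ N)
    rw [dist_eq_norm] at hlt2
    exact absurd hlt2 (not_lt.mpr hge)
  -- conclude
  have hbij : Function.Bijective S := ⟨hinj, hsurj⟩
  exact (spectrum.mem_iff.mp hμ) (ContinuousLinearMap.isUnit_iff_bijective.mpr hbij)

end Aux2

section Aux3

variable {X : Type*} [NormedAddCommGroup X] [NormedSpace ℂ X] [CompleteSpace X]

/-- A compact operator has no injective sequence of spectral values bounded away from 0. -/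
lemma finite_large (T : X →L[ℂ] X) (hT : IsCompactOperator (T : X → X))
    {δ : ℝ} (hδ : 0 < δ) (μ : ℕ → ℂ) (hinj : Function.Injective μ)
    (hnorm : ∀ j, δ ≤ ‖μ j‖) (hspec : ∀ j, μ j ∈ spectrum ℂ T) : False := by
  have hμ0 : ∀ j, μ j ≠ 0 := fun j h => by
    have := hnorm j
    rw [h, norm_zero] at this
    linarith
  choose x hx1 hxe using fun j => exists_eigen T hT (hμ0 j) (hspec j)
  have hli : LinearIndependent ℂ x := by
    apply Module.End.eigenvectors_linearIndependent' (T : X →ₗ[ℂ] X) μ hinj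
    intro j
    refine ⟨Module.End.mem_eigenspace_iff.mpr ?_, ?_⟩
    · exact hxe j
    · intro h
      have := hx1 j
      rw [h, norm_zero] at this
      exact one_ne_zero this.symm
  set E : ℕ → Submodule ℂ X := fun n => Submodule.span ℂ (x '' Set.Iio n) with hEdef
  have hEmono : ∀ {m n : ℕ}, m ≤ n → E m ≤ E n := fun h =>
    Submodule.span_mono (Set.image_mono (fun j hj => lt_of_lt_of_le hj h))
  have hclosed : ∀ n, IsClosed ((E n : Set X)) := by
    intro n
    haveI := FiniteDimensional.span_of_finite ℂ ((Set.finite_Iio n).image x)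
    exact Submodule.closed_of_finiteDimensional _
  have hxnotin : ∀ n, x n ∉ E n := fun n =>
    hli.notMem_span_image (by simp)
  have hxin : ∀ n, x n ∈ E (n+1) := fun n =>
    Submodule.subset_span ⟨n, by simp, rfl⟩
  have he : ∀ n : ℕ, ∃ e : X, e ∈ E (n+1) ∧ ‖e‖ = 1 ∧ ∀ w ∈ E n, (1:ℝ)/2 ≤ ‖e - w‖ :=
    fun n => riesz_step (E n) (E (n+1)) (hclosed n) (hEmono n.le_succ) (hxin n) (hxnotin n)
  choose e heE heN heD using he
  -- T - μ n maps E (n+1) into E n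
  have hGmap : ∀ n, ∀ v ∈ E (n+1), T v - μ n • v ∈ E n := by
    intro n v hv
    set G : X →L[ℂ] X := T - algebraMap ℂ (X →L[ℂ] X) (μ n) with hGdef
    have hGv : ∀ u : X, G u = T u - μ n • u := by
      intro u
      simp [hGdef, Algebra.algebraMap_eq_smul_one, ContinuousLinearMap.sub_apply,
        ContinuousLinearMap.smul_apply, ContinuousLinearMap.one_apply]
    have hmapped : Submodule.map (G : X →ₗ[ℂ] X) (E (n+1)) ≤ E n := by
      rw [hEdef]
      simp only
      rw [Submodule.map_span]
      apply Submodule.span_le.mpr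
      rintro _ ⟨_, ⟨j, hj, rfl⟩, rfl⟩
      simp only [Set.mem_Iio] at hj
      have : G (x j) = (μ j - μ n) • x j := by
        rw [hGv, hxe j, sub_smul]
      rw [ContinuousLinearMap.coe_coe, this]
      rcases Nat.lt_succ_iff_lt_or_eq.mp hj with h | rfl
      · exact Submodule.smul_mem _ _ (Submodule.subset_span ⟨j, h, rfl⟩)
      · simp
    have := hmapped (Submodule.mem_map_of_mem hv)
    rwa [ContinuousLinearMap.coe_coe, hGv] at this
  have hTE : ∀ n, T (e n) ∈ E (n+1) := by
    intro n
    have h1 : T (e n) - μ n • e n ∈ E n := hGmap n (e n) (heE n)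
    have : T (e n) = (T (e n) - μ n • e n) + μ n • e n := by abel
    rw [this]
    exact Submodule.add_mem _ (hEmono n.le_succ h1) (Submodule.smul_mem _ _ (heE n))
  obtain ⟨y, φ, hφ, hty⟩ := compact_subseq T hT e (fun k => (heN k).le)
  have hcauchy : CauchySeq (fun k => T (e (φ k))) := hty.cauchySeq
  rw [Metric.cauchySeq_iff] at hcauchy
  obtain ⟨N, hN⟩ := hcauchy (δ/2) (by positivity)
  have hlt : φ N < φ (N+1) := hφ (Nat.lt_succ_self N)
  set m := φ N with hm
  set n := φ (N+1) with hn
  -- T e n - T e m = μ n • (e n - w), w ∈ E n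
  have hG : T (e n) - μ n • e n ∈ E n := hGmap n (e n) (heE n)
  have hTm : T (e m) ∈ E n := hEmono hlt (hTE m)
  set w : X := (μ n)⁻¹ • (T (e m) - (T (e n) - μ n • e n)) with hw
  have hwmem : w ∈ E n := Submodule.smul_mem _ _ (Submodule.sub_mem _ hTm hG)
  have hdiff : T (e n) - T (e m) = μ n • (e n - w) := by
    rw [hw, smul_sub, smul_smul, mul_inv_cancel₀ (hμ0 n), one_smul]
    abel
  have hge : δ/2 ≤ ‖T (e n) - T (e m)‖ := by
    rw [hdiff, norm_smul]
    have h2 := heD n w hwmem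
    calc δ/2 = δ * (1/2) := by ring
      _ ≤ ‖μ n‖ * ‖e n - w‖ := by
          apply mul_le_mul (hnorm n) h2 (by norm_num) (norm_nonneg _)
  have hlt2 := hN (N+1) (Nat.le_succ N) N le_rfl
  rw [dist_eq_norm] at hlt2
  exact absurd hlt2 (not_lt.mpr hge)

/-- There is a circle of any arbitrarily small radius around a nonzero point
that avoids the spectrum of a compact operator. -/
lemma good_radius (T : X →L[ℂ] X) (hT : IsCompactOperator (T : X → X))
    {lam : ℂ} {ε : ℝ} (hε : 0 < ε) (hε2 : 2 * ε ≤ ‖lam‖) :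
    ∃ r : ℝ, 0 < r ∧ r < ε ∧ ∀ z ∈ spectrum ℂ T, dist z lam ≠ r := by
  by_contra hno
  push_neg at hno
  have hex : ∀ j : ℕ, ∃ z ∈ spectrum ℂ T, dist z lam = ε/(j+2) := by
    intro j
    apply hno
    · positivity
    · rw [div_lt_iff₀ (by positivity)]
      nlinarith [Nat.cast_nonneg (α := ℝ) j]
  choose g hgspec hgdist using hex
  have hginj : Function.Injective g := by
    intro i j hij
    have h1 : ε/((i:ℝ)+2) = ε/((j:ℝ)+2) := by rw [← hgdist i, ← hgdist j, hij]
    rw [div_eq_div_iff (by positivity) (by positivity)] at h1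
    have h2 : (j:ℝ)+2 = (i:ℝ)+2 := mul_left_cancel₀ hε.ne' (by linarith)
    exact_mod_cast (by linarith : (i:ℝ) = j)
  have hgnorm : ∀ j, ε ≤ ‖g j‖ := by
    intro j
    have h2 : ‖lam‖ ≤ dist lam (g j) + ‖g j‖ := by
      simpa [dist_zero_right] using dist_triangle lam (g j) 0
    have h3 : dist lam (g j) = ε/(j+2) := by rw [dist_comm]; exact hgdist j
    have h4 : ε/((j:ℝ)+2) ≤ ε := by
      apply div_le_self hε.le
      have : (0:ℝ) ≤ (j:ℝ) := Nat.cast_nonneg j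
      linarith
    rw [h3] at h2
    linarith
  exact finite_large T hT hε g hginj hgnorm hgspec

end Aux3

section Key

open Complex Real

variable {X : Type*} [NormedAddCommGroup X] [NormedSpace ℂ X] [CompleteSpace X] [Nontrivial X]

/-- Key lemma: for small enough perturbations, the spectrum meets any ball around a
nonzero spectral point of a compact operator. -/
lemma key_lemma (T : X →L[ℂ] X) (hT : IsCompactOperator (T : X → X))
    {lam : ℂ} (hlam : lam ∈ spectrum ℂ T) {ε : ℝ} (hε : 0 < ε) (hε2 : 2 * ε ≤ ‖lam‖) :
    ∃ η : ℝ, 0 < η ∧ ∀ Tn : X →L[ℂ] X, ‖Tn - T‖ < η →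
      (spectrum ℂ Tn ∩ Metric.ball lam ε).Nonempty := by
  obtain ⟨r, hr0, hrε, hrgood⟩ := good_radius T hT hε hε2
  have hlam0 : lam ≠ 0 := by
    intro h
    rw [h, norm_zero] at hε2
    linarith
  -- the circle lies in the resolvent set of T
  have hsphere : ∀ z ∈ Metric.sphere lam r, z ∈ resolventSet ℂ T := by
    intro z hz
    by_contra hc
    exact hrgood z (spectrum.mem_iff.mpr (fun h => hc h)) (Metric.mem_sphere.mp hz)
  -- resolvent is continuous on the circle; get a bound M
  have hcont : ContinuousOn (resolvent T) (Metric.sphere lam r) := by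
    intro z hz
    exact ((spectrum.hasDerivAt_resolvent
      (hsphere z hz)).differentiableAt.continuousAt).continuousWithinAt
  obtain ⟨C, hC⟩ := (isCompact_sphere lam r).exists_bound_of_continuousOn hcont
  set M : ℝ := max C 1 with hMdef
  have hM1 : (1:ℝ) ≤ M := le_max_right _ _
  have hM0 : (0:ℝ) < M := lt_of_lt_of_le one_pos hM1
  have hMz : ∀ z ∈ Metric.sphere lam r, ‖resolvent T z‖ ≤ M :=
    fun z hz => (hC z hz).trans (le_max_left _ _)
  -- eigenvector
  obtain ⟨x, hx1, hxe⟩ := exists_eigen T hT hlam0 hlam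
  set P : X →L[ℂ] X := ∮ z in C(lam, r), resolvent T z with hPdef
  -- P x = 2πi • x
  have hFx : ∀ z ∈ Metric.sphere lam r, (resolvent T z) x = (z - lam)⁻¹ • x := by
    intro z hz
    have hz' := hsphere z hz
    have hzlam : z ≠ lam := by
      intro h
      have := Metric.mem_sphere.mp hz
      rw [h, dist_self] at this
      exact hr0.ne this
    have hu : (algebraMap ℂ (X →L[ℂ] X) z - T) ((z - lam)⁻¹ • x) = x := by
      simp only [ContinuousLinearMap.sub_apply, map_smul,
        Algebra.algebraMap_eq_smul_one, ContinuousLinearMap.smul_apply,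
        ContinuousLinearMap.one_apply, hxe]
      rw [← sub_smul, smul_smul, inv_mul_cancel₀ (sub_ne_zero.mpr hzlam), one_smul]
    have hu' : (hz'.unit : X →L[ℂ] X) ((z - lam)⁻¹ • x) = x := by
      rw [hz'.unit_spec]
      exact hu
    have hcancel : ∀ w : X, ((hz'.unit⁻¹ : (X →L[ℂ] X)ˣ) : X →L[ℂ] X)
        ((hz'.unit : X →L[ℂ] X) w) = w := by
      intro w
      rw [← ContinuousLinearMap.mul_apply, Units.inv_mul, ContinuousLinearMap.one_apply]
    have h2 := congrArg (((hz'.unit⁻¹ : (X →L[ℂ] X)ˣ) : X →L[ℂ] X)) hu'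
    rw [hcancel] at h2
    rw [spectrum.resolvent_eq hz']
    exact h2.symm
  have hresint : CircleIntegrable (resolvent T) lam r :=
    ContinuousOn.circleIntegrable hr0.le hcont
  have hPx : P x = (2 * (π:ℝ) * Complex.I) • x := by
    have hint : IntervalIntegrable
        (fun θ : ℝ => deriv (circleMap lam r) θ • resolvent T (circleMap lam r θ))
        MeasureTheory.volume 0 (2 * π) := hresint.out
    have h1 : P x = ∫ θ in (0:ℝ)..(2 * π),
        (deriv (circleMap lam r) θ • resolvent T (circleMap lam r θ)) x := by
      rw [hPdef]
      exact ContinuousLinearMap.intervalIntegral_apply hint x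
    have h2 : ∀ θ : ℝ, (deriv (circleMap lam r) θ • resolvent T (circleMap lam r θ)) x
        = deriv (circleMap lam r) θ • ((resolvent T (circleMap lam r θ)) x) := by
      intro θ
      rfl
    rw [h1]
    simp_rw [h2]
    have h3 : (∫ θ in (0:ℝ)..(2 * π),
        deriv (circleMap lam r) θ • ((resolvent T (circleMap lam r θ)) x))
        = ∮ z in C(lam, r), (resolvent T z) x := rfl
    rw [h3]
    have h4 : (∮ z in C(lam, r), (resolvent T z) x)
        = ∮ z in C(lam, r), (z - lam)⁻¹ • x :=
      circleIntegral.integral_congr hr0.le (fun z hz => by rw [hFx z hz])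
    rw [h4, circleIntegral.integral_smul_const, circleIntegral.integral_sub_inv_of_mem_ball (Metric.mem_ball_self hr0)]
  have hPnorm : 2 * (π:ℝ) ≤ ‖P‖ := by
    have h1 : ‖P x‖ ≤ ‖P‖ * ‖x‖ := P.le_opNorm x
    rw [hPx, hx1, mul_one] at h1
    calc 2 * (π:ℝ) = ‖(2 * (π:ℝ) * Complex.I : ℂ)‖ * ‖x‖ := by
          rw [hx1, mul_one]
          simp [abs_of_pos Real.pi_pos]
      _ = ‖(2 * (π:ℝ) * Complex.I : ℂ) • x‖ := (norm_smul _ _).symm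
      _ ≤ ‖P‖ := h1
  -- choose η
  refine ⟨min ((2*M)⁻¹) ((4*r*M^2)⁻¹), lt_min (by positivity) (by positivity), ?_⟩
  intro Tn hTn
  by_contra hempty
  rw [Set.not_nonempty_iff_eq_empty] at hempty
  have hres : ∀ z ∈ Metric.ball lam ε, z ∈ resolventSet ℂ Tn := by
    intro z hz
    by_contra hc
    have : z ∈ spectrum ℂ Tn ∩ Metric.ball lam ε := ⟨fun h => hc h, hz⟩
    rw [hempty] at this
    exact this
  have hball : Metric.closedBall lam r ⊆ Metric.ball lam ε := fun z hz =>
    lt_of_le_of_lt (Metric.mem_closedBall.mp hz) hrε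
  have hsphere_sub : Metric.sphere lam r ⊆ Metric.ball lam ε := fun z hz =>
    hball (Metric.sphere_subset_closedBall hz)
  -- Pn = 0 by Cauchy-Goursat
  have hPn0 : (∮ z in C(lam, r), resolvent Tn z) = 0 := by
    apply circleIntegral_eq_zero_of_differentiable_on_off_countable hr0.le
      Set.countable_empty
    · intro z hz
      exact ((spectrum.hasDerivAt_resolvent
        (hres z (hball hz))).differentiableAt.continuousAt).continuousWithinAt
    · intro z hz
      exact (spectrum.hasDerivAt_resolvent
        (hres z (hball (Metric.ball_subset_closedBall hz.1)))).differentiableAt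
  -- norm bound on the difference of resolvents on the circle
  have hTnT : ‖Tn - T‖ ≤ (2*M)⁻¹ := (le_of_lt hTn).trans (min_le_left _ _)
  have hbound : ∀ z ∈ Metric.sphere lam r,
      ‖resolvent Tn z - resolvent T z‖ ≤ 2*M^2*‖Tn - T‖ := by
    intro z hz
    have hzT : z ∈ resolventSet ℂ T := hsphere z hz
    have hzTn : z ∈ resolventSet ℂ Tn := hres z (hsphere_sub hz)
    set u := hzT.unit with hu
    set v := hzTn.unit with hv
    set uu : X →L[ℂ] X := (u : X →L[ℂ] X) with huu
    set vv : X →L[ℂ] X := (v : X →L[ℂ] X) with hvv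
    set ui : X →L[ℂ] X := ((u⁻¹ : (X →L[ℂ] X)ˣ) : X →L[ℂ] X) with hui
    set vi : X →L[ℂ] X := ((v⁻¹ : (X →L[ℂ] X)ˣ) : X →L[ℂ] X) with hvi
    have hmu : uu * ui = 1 := u.mul_inv
    have hmv : vi * vv = 1 := v.inv_mul
    have hid : vi - ui = vi * (uu - vv) * ui := by
      calc vi - ui = vi * (uu * ui) - (vi * vv) * ui := by rw [hmu, hmv, mul_one, one_mul]
        _ = vi * (uu - vv) * ui := by noncomm_ring
    have huv : uu - vv = Tn - T := by
      rw [huu, hvv, hzT.unit_spec, hzTn.unit_spec]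
      abel
    have hunorm : ‖ui‖ ≤ M := by
      have := hMz z hz
      rwa [spectrum.resolvent_eq hzT] at this
    have hvnorm : ‖vi‖ ≤ 2*M := by
      have h1 : ‖vi‖ ≤ ‖ui‖ + ‖vi‖ * ‖Tn - T‖ * ‖ui‖ := by
        have h0 : vi = ui + vi * (uu - vv) * ui := by rw [← hid]; abel
        calc ‖vi‖ = ‖ui + vi * (uu - vv) * ui‖ := by rw [← h0]
          _ ≤ ‖ui‖ + ‖vi * (uu - vv) * ui‖ := norm_add_le _ _
          _ ≤ ‖ui‖ + ‖vi‖ * ‖Tn - T‖ * ‖ui‖ := by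
              gcongr
              rw [huv]
              exact (norm_mul_le _ _).trans
                (mul_le_mul_of_nonneg_right (norm_mul_le _ _) (norm_nonneg _))
      have hvn := norm_nonneg vi
      have hTnT' : ‖Tn - T‖ * ‖ui‖ ≤ (2*M)⁻¹ * M :=
        mul_le_mul hTnT hunorm (norm_nonneg _) (by positivity)
      have h2 : (2*M)⁻¹ * M = 1/2 := by field_simp
      nlinarith [mul_le_mul_of_nonneg_left (hTnT'.trans_eq h2) hvn]
    have hfinal : ‖resolvent Tn z - resolvent T z‖ ≤ ‖vi‖ * ‖Tn - T‖ * ‖ui‖ := by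
      have e1 : resolvent Tn z = vi := spectrum.resolvent_eq hzTn
      have e2 : resolvent T z = ui := spectrum.resolvent_eq hzT
      rw [e1, e2, hid, huv]
      exact (norm_mul_le _ _).trans
        (mul_le_mul_of_nonneg_right (norm_mul_le _ _) (norm_nonneg _))
    calc ‖resolvent Tn z - resolvent T z‖ ≤ ‖vi‖ * ‖Tn - T‖ * ‖ui‖ := hfinal
      _ ≤ (2*M) * ‖Tn - T‖ * M := by gcongr
      _ = 2*M^2*‖Tn - T‖ := by ring
  -- resolvent of Tn is circle integrable
  have hcontn : ContinuousOn (resolvent Tn) (Metric.sphere lam r) := by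
    intro z hz
    exact ((spectrum.hasDerivAt_resolvent
      (hres z (hsphere_sub hz))).differentiableAt.continuousAt).continuousWithinAt
  have hresintn : CircleIntegrable (resolvent Tn) lam r :=
    ContinuousOn.circleIntegrable hr0.le hcontn
  have hdiff : ‖(∮ z in C(lam, r), resolvent Tn z) - ∮ z in C(lam, r), resolvent T z‖
      ≤ 2 * π * r * (2*M^2*‖Tn - T‖) := by
    rw [← circleIntegral.integral_sub hresintn hresint]
    have := circleIntegral.norm_integral_le_of_norm_le_const (f := fun z => resolvent Tn z - resolvent T z)
      (c := lam) (R := r) (C := 2*M^2*‖Tn - T‖) hr0.le hbound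
    exact this
  rw [hPn0, zero_sub, norm_neg, ← hPdef] at hdiff
  -- contradiction
  have hsmall : ‖Tn - T‖ < (4*r*M^2)⁻¹ := lt_of_lt_of_le hTn (min_le_right _ _)
  have hlt : 2 * π * r * (2*M^2*‖Tn - T‖) < 2 * π := by
    have h1 : 2*M^2*‖Tn - T‖ * r < 1/2 := by
      have h2 : ‖Tn - T‖ * (4*r*M^2) < 1 := by
        have h3 : ‖Tn - T‖ < 1/(4*r*M^2) := by rwa [inv_eq_one_div] at hsmall
        exact (lt_div_iff₀ (by positivity)).mp h3
      nlinarith [norm_nonneg (Tn - T)]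
    nlinarith [Real.pi_pos]
  have : ‖P‖ < 2 * π := lt_of_le_of_lt hdiff hlt
  linarith

end Key

/-- If bounded operators `Tₙ` on a nonzero complex Banach space converge in operator norm
to a compact operator `T`, then every nonzero point of the spectrum of `T` is the limit of
a sequence of points of the spectra of the `Tₙ`: no nonzero continuous eigenvalue is missed
by the approximating operators. -/
theorem nonzero_spectrum_attained_by_approximations
    {X : Type*} [NormedAddCommGroup X] [NormedSpace ℂ X] [CompleteSpace X] [Nontrivial X]
    (T : X →L[ℂ] X) (hT : IsCompactOperator (T : X → X))
    (Tseq : ℕ → X →L[ℂ] X)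
    (hconv : Tendsto (fun n => ‖Tseq n - T‖) atTop (nhds 0)) :
    ∀ lam ∈ spectrum ℂ T, lam ≠ 0 →
      ∃ lamseq : ℕ → ℂ, (∀ n, lamseq n ∈ spectrum ℂ (Tseq n)) ∧
        Tendsto lamseq atTop (nhds lam) := by
  intro lam hlam hlam0
  have hne : ∀ n, (spectrum ℂ (Tseq n)).Nonempty := fun n => spectrum.nonempty (Tseq n)
  have hcpt : ∀ n, IsCompact (spectrum ℂ (Tseq n)) := fun n => spectrum.isCompact (Tseq n)
  have hch : ∀ n, ∃ y ∈ spectrum ℂ (Tseq n),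
      Metric.infDist lam (spectrum ℂ (Tseq n)) = dist lam y :=
    fun n => (hcpt n).exists_infDist_eq_dist (hne n) lam
  choose lamseq hmem hdist using hch
  refine ⟨lamseq, hmem, ?_⟩
  rw [Metric.tendsto_atTop]
  intro ε hε
  have hlampos : 0 < ‖lam‖ := norm_pos_iff.mpr hlam0
  set ε' := min (ε/2) (‖lam‖/2) with hε'
  have hε'0 : 0 < ε' := lt_min (by linarith) (by positivity)
  have h2ε' : 2 * ε' ≤ ‖lam‖ := by
    have := min_le_right (ε/2) (‖lam‖/2)
    rw [hε']
    linarith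
  obtain ⟨η, hη0, hkey⟩ := key_lemma T hT hlam hε'0 h2ε'
  obtain ⟨N, hN⟩ := eventually_atTop.mp (hconv.eventually_lt_const hη0)
  refine ⟨N, fun n hn => ?_⟩
  obtain ⟨μ, hμs, hμb⟩ := hkey (Tseq n) (hN n hn)
  have h1 : dist lam (lamseq n) ≤ dist lam μ := by
    rw [← hdist n]
    exact Metric.infDist_le_dist_of_mem hμs
  have h2 : dist lam μ < ε' := by
    rw [dist_comm]
    exact Metric.mem_ball.mp hμb
  have h3 : ε' ≤ ε/2 := min_le_left _ _
  calc dist (lamseq n) lam = dist lam (lamseq n) := dist_comm _ _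
    _ ≤ dist lam μ := h1
    _ < ε' := h2
    _ ≤ ε/2 := h3
    _ < ε := by linarith
end
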